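/- Let A be a unital C*-algebra, H a complex Hilbert space, P ∈ B(H) positive with P ≠ 0 and ker P ≠ {0}, and Φ ∈ CP^{(P)}(A,B(H)). Let H_0 be the closure of the range of P, P_0 the restriction of P to H_0, and Φ_0 : A → B(H_0) the compression of Φ to H_0 (so Φ_0 ∈ CP^{(P_0)}(A,B(H_0))). Then: (i) if Φ is a P-C*-extreme point of CP^{(P)}(A,B(H)), then Φ_0 is a P_0-C*-extreme point of CP^{(P_0)}(A,B(H_0)); (ii) conversely, if H is finite-dimensional and Φ_0 is a P_0-C*-extreme point of CP^{(P_0)}(A,B(H_0)), then Φ is a P-C*-extreme point of CP^{(P)}(A,B(H)). -/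

import Mathlib

open scoped ComplexOrder

noncomputable section

section Defs

variable {A H : Type*}
variable [NormedAddCommGroup H] [InnerProductSpace ℂ H]

/-- An operator on a complex inner ℂ product space is positive:
`0 ≤ ⟪x, T x⟫` for all `x`. -/
def IsPosOp (T : H →L[ℂ] H) : Prop := ∀ x : H, 0 ≤ (inner ℂ x (T x) : ℂ)

variable [Ring A] [StarRing A] [Algebra ℂ A]

/-- Complete positivity of a linear map `Φ : A → B(H)`:
`∑_{i,j} ⟪h i, Φ(a i* a j) (h j)⟫ ≥ 0` for all finite families. -/
def IsCPMap (Φ : A →ₗ[ℂ] (H →L[ℂ] H)) : Prop :=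
  ∀ (n : ℕ) (a : Fin n → A) (h : Fin n → H),
    0 ≤ ∑ i, ∑ j, (inner ℂ (h i) ((Φ (star (a i) * a j)) (h j)) : ℂ)

/-- `CP^{(P)}(A, B(H))`: the CP maps `Φ` with `Φ 1 = P`. -/
def CPP (P : H →L[ℂ] H) : Set (A →ₗ[ℂ] (H →L[ℂ] H)) := {Φ | IsCPMap Φ ∧ Φ 1 = P}

/-- `CCP(A, B(H))`: the contractive CP maps, i.e. CP maps with `Φ 1 ≤ 1`. -/
def CCPmaps : Set (A →ₗ[ℂ] (H →L[ℂ] H)) := {Φ | IsCPMap Φ ∧ IsPosOp (1 - Φ 1)}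

variable [CompleteSpace H]

/-- `Ad_T : X ↦ T* X T`, as a linear map on `B(H)`. -/
def conjAd (T : H →L[ℂ] H) : (H →L[ℂ] H) →ₗ[ℂ] (H →L[ℂ] H) where
  toFun X := star T * X * T
  map_add' X Y := by simp [add_mul, mul_add]
  map_smul' c X := by simp [mul_smul_comm, smul_mul_assoc]

/-- `Φ ∈ CP^{(P)}` is a `P`-`C*`-extreme point of `CP^{(P)}(A, B(H))`:
whenever `Φ = ∑ Ad_{T j} ∘ Φs j` is a proper `P`-`C*`-convex combination of members of
`CP^{(P)}`, each `Φs j` equals `Ad_{S j} ∘ Φ` for some invertible `S j`. -/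
def IsPCExtreme (P : H →L[ℂ] H) (Φ : A →ₗ[ℂ] (H →L[ℂ] H)) : Prop :=
  Φ ∈ CPP (A := A) P ∧
  ∀ (n : ℕ) (T : Fin n → (H →L[ℂ] H)) (Φs : Fin n → (A →ₗ[ℂ] (H →L[ℂ] H))),
    (∀ j, IsUnit (T j)) → (∀ j, Φs j ∈ CPP (A := A) P) →
    (∑ j, star (T j) * P * T j) = P →
    Φ = ∑ j, (conjAd (T j)).comp (Φs j) →
    ∀ j, ∃ S : H →L[ℂ] H, IsUnit S ∧ Φs j = (conjAd S).comp Φ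

/-- `Φ ∈ C` is a `C*`-extreme point of the `C*`-convex set `C`:
whenever `Φ = ∑ Ad_{T j} ∘ Φs j` is a proper `C*`-convex combination of members of `C`,
each `Φs j` is unitarily equivalent to `Φ`. -/
def IsCstarExtreme (C : Set (A →ₗ[ℂ] (H →L[ℂ] H))) (Φ : A →ₗ[ℂ] (H →L[ℂ] H)) : Prop :=
  Φ ∈ C ∧
  ∀ (n : ℕ) (T : Fin n → (H →L[ℂ] H)) (Φs : Fin n → (A →ₗ[ℂ] (H →L[ℂ] H))),
    (∀ j, IsUnit (T j)) → (∀ j, Φs j ∈ C) →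
    (∑ j, star (T j) * T j) = 1 →
    Φ = ∑ j, (conjAd (T j)).comp (Φs j) →
    ∀ j, ∃ U : H →L[ℂ] H, U ∈ unitary (H →L[ℂ] H) ∧ Φs j = (conjAd U).comp Φ

/-- `Φ ∈ C` is a linear extreme point of the convex set `C`. -/
def IsLinExtreme (C : Set (A →ₗ[ℂ] (H →L[ℂ] H))) (Φ : A →ₗ[ℂ] (H →L[ℂ] H)) : Prop :=
  Φ ∈ C ∧
  ∀ (n : ℕ) (t : Fin n → ℝ) (Φs : Fin n → (A →ₗ[ℂ] (H →L[ℂ] H))),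
    (∀ j, 0 < t j ∧ t j < 1) → (∀ j, Φs j ∈ C) → (∑ j, t j) = 1 →
    Φ = ∑ j, (t j : ℂ) • Φs j →
    ∀ j, Φs j = Φ

end Defs

section Compress

variable {A H : Type*} [NormedAddCommGroup H] [InnerProductSpace ℂ H]

/-- Compression `X ↦ Q X|_K` of an operator on `H` to an operator on the subspace `K`. -/
def compressOp (K : Submodule ℂ H) [K.HasOrthogonalProjection] (X : H →L[ℂ] H) : K →L[ℂ] K :=
  (K.orthogonalProjectionOnto).comp (X.comp K.subtypeL)

variable [Ring A] [StarRing A] [Algebra ℂ A]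

/-- Compression of a linear map `Φ : A → B(H)` to a linear map `A → B(K)`. -/
def compressCP (K : Submodule ℂ H) [K.HasOrthogonalProjection] (Φ : A →ₗ[ℂ] (H →L[ℂ] H)) :
    A →ₗ[ℂ] (K →L[ℂ] K) where
  toFun a := compressOp K (Φ a)
  map_add' a b := by
    simp [compressOp, ContinuousLinearMap.add_comp, ContinuousLinearMap.comp_add]
  map_smul' c a := by
    simp [compressOp, ContinuousLinearMap.smul_comp, ContinuousLinearMap.comp_smulₛₗ]

end Compress

section AuxLemmas
variable {H : Type*} [NormedAddCommGroup H] [InnerProductSpace ℂ H]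
variable [CompleteSpace H]

theorem IsPosOp.isSelfAdjoint {T : H →L[ℂ] H} (h : IsPosOp T) : IsSelfAdjoint T := by
  rw [ContinuousLinearMap.isSelfAdjoint_iff_isSymmetric]
  rw [show ((T : H →ₗ[ℂ] H)).IsSymmetric ↔ _ from
    LinearMap.isSymmetric_iff_inner_map_self_real _]
  intro v
  have him : (inner ℂ v (T v) : ℂ).im = 0 := (Complex.nonneg_iff.mp (h v)).2.symm
  have e1 : (inner ℂ (T v) v : ℂ) = starRingEnd ℂ (inner ℂ v (T v) : ℂ) :=
    (inner_conj_symm (T v) v).symm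
  rw [show (inner ℂ ((T : H →ₗ[ℂ] H) v) v : ℂ) = (inner ℂ (T v) v : ℂ) from rfl]
  rw [inner_conj_symm, e1]
  exact (Complex.conj_eq_iff_im.mpr him).symm

theorem IsPosOp.apply_eq_zero {T : H →L[ℂ] H} (h : IsPosOp T) {x : H}
    (hx : (inner ℂ x (T x) : ℂ) = 0) : T x = 0 := by
  have hsa := h.isSelfAdjoint
  have hsym := ContinuousLinearMap.isSelfAdjoint_iff_isSymmetric.mp hsa
  have key : ∀ y : H, (inner ℂ y (T x) : ℂ) = 0 := by
    intro y
    by_contra hz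
    set z : ℂ := inner ℂ y (T x) with hzdef
    have hy := h y
    set w : ℝ := (inner ℂ y (T y) : ℂ).re with hw
    have hw0 : 0 ≤ w := (Complex.nonneg_iff.mp hy).1
    have hexp : ∀ t : ℝ, (0:ℝ) ≤ -2 * t * Complex.normSq z + t^2 * Complex.normSq z * w := by
      intro t
      have hpos := h (x + (-(t:ℂ) * z) • y)
      set c : ℂ := -(t:ℂ) * z with hc
      have hxy : (inner ℂ x (T y) : ℂ) = starRingEnd ℂ z := by
        calc (inner ℂ x (T y) : ℂ) = (inner ℂ (T x) y : ℂ) := (hsym x y).symm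
          _ = starRingEnd ℂ (inner ℂ y (T x) : ℂ) := (inner_conj_symm (T x) y).symm
      have him : (inner ℂ y (T y) : ℂ) = (w : ℂ) := by
        have := (Complex.nonneg_iff.mp hy).2
        rw [hw]; exact Complex.ext rfl this.symm
      have hexp2 : (inner ℂ (x + c • y) (T (x + c • y)) : ℂ)
          = c * starRingEnd ℂ z + starRingEnd ℂ c * z + starRingEnd ℂ c * c * (w : ℂ) := by
        rw [map_add, map_smul]
        rw [inner_add_left, inner_add_right, inner_add_right]
        rw [inner_smul_left, inner_smul_right, inner_smul_left, inner_smul_right]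
        rw [hx, hxy, ← hzdef, him]
        ring
      rw [hexp2, hc] at hpos
      have h1 : z * starRingEnd ℂ z = (Complex.normSq z : ℂ) := Complex.mul_conj z
      have h2 : starRingEnd ℂ z * z = (Complex.normSq z : ℂ) := by rw [mul_comm]; exact h1
      have hval : (-(t:ℂ) * z) * starRingEnd ℂ z + starRingEnd ℂ (-(t:ℂ) * z) * z
          + starRingEnd ℂ (-(t:ℂ) * z) * (-(t:ℂ) * z) * (w:ℂ)
          = ((-2 * t * Complex.normSq z + t^2 * Complex.normSq z * w : ℝ) : ℂ) := by
        simp only [map_mul, map_neg, Complex.conj_ofReal]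
        push_cast
        linear_combination (-(t:ℂ)) * h1 + (-(t:ℂ) + (t:ℂ)^2 * (w:ℂ)) * h2
      rw [hval] at hpos
      exact Complex.zero_le_real.mp hpos
    have hnz : 0 < Complex.normSq z := by rwa [Complex.normSq_pos]
    have hw1 : 0 < w + 1 := by linarith
    have hspos : (0:ℝ) < 1/(w+1) := by positivity
    have hs1 : (1/(w+1)) * w < 1 := by
      rw [div_mul_eq_mul_div, one_mul, div_lt_one hw1]; linarith
    have hcontr := hexp (1/(w+1))
    nlinarith [mul_pos hspos hnz, hs1]
  have := key (T x)
  rwa [inner_self_eq_zero] at this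

variable {A : Type*} [NormedRing A] [StarRing A] [CStarRing A] [NormedAlgebra ℂ A]
  [StarModule ℂ A] [CompleteSpace A]

local instance csa' : CStarAlgebra A := { }

theorem exists_sqrt_norm_sub [Nontrivial A] (a : A) :
    ∃ c : A, star c * c = algebraMap ℝ A (‖a‖^2) - star a * a := by
  set b : A := algebraMap ℝ A (‖a‖^2) - star a * a with hb
  have hsa : IsSelfAdjoint b :=
    (IsSelfAdjoint.algebraMap A (star_trivial _)).sub (IsSelfAdjoint.star_mul_self a)
  have hspec : ∀ x ∈ spectrum ℝ b, 0 ≤ x := by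
    intro x hx
    rw [hb, ← spectrum.singleton_sub_eq] at hx
    obtain ⟨r, hr, μ, hμ, hx⟩ := Set.mem_sub.mp hx
    rcases Set.mem_singleton_iff.mp hr with rfl
    have hle : ‖μ‖ ≤ ‖star a * a‖ := spectrum.norm_le_norm_of_mem hμ
    rw [CStarRing.norm_star_mul_self] at hle
    have : μ ≤ ‖a‖ ^ 2 := by
      calc μ ≤ |μ| := le_abs_self μ
        _ ≤ ‖a‖ * ‖a‖ := hle
        _ = ‖a‖ ^ 2 := (sq ‖a‖).symm
    linarith [hx ▸ sub_nonneg.mpr this]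
  refine ⟨cfc Real.sqrt b, ?_⟩
  have h1 : IsSelfAdjoint (cfc Real.sqrt b) := cfc_predicate Real.sqrt b
  rw [h1.star_eq, ← cfc_mul Real.sqrt Real.sqrt b]
  calc cfc (fun x => Real.sqrt x * Real.sqrt x) b = cfc (fun x : ℝ => x) b :=
        cfc_congr (fun x hx => Real.mul_self_sqrt (hspec x hx))
    _ = b := cfc_id ℝ b

namespace IsCPMap

variable {Φ : A →ₗ[ℂ] (H →L[ℂ] H)}

theorem one (hΦ : IsCPMap Φ) (a : A) (h : H) : 0 ≤ (inner ℂ h ((Φ (star a * a)) h) : ℂ) := by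
  have := hΦ 1 (fun _ => a) (fun _ => h)
  simpa using this

theorem posOp (hΦ : IsCPMap Φ) (a : A) : IsPosOp (Φ (star a * a)) := fun x => hΦ.one a x

theorem posOp_one (hΦ : IsCPMap Φ) : IsPosOp (Φ 1) := by
  have := hΦ.posOp 1
  rwa [star_one, one_mul] at this

theorem two (hΦ : IsCPMap Φ) (a₀ a₁ : A) (h₀ h₁ : H) :
    0 ≤ (inner ℂ h₀ ((Φ (star a₀ * a₀)) h₀) : ℂ) + (inner ℂ h₀ ((Φ (star a₀ * a₁)) h₁) : ℂ)
      + (inner ℂ h₁ ((Φ (star a₁ * a₀)) h₀) : ℂ) + (inner ℂ h₁ ((Φ (star a₁ * a₁)) h₁) : ℂ) := by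
  have := hΦ 2 ![a₀, a₁] ![h₀, h₁]
  simpa [Fin.sum_univ_two, add_assoc] using this

theorem star_apply (hΦ : IsCPMap Φ) (a : A) :
    Φ (star a) = ContinuousLinearMap.adjoint (Φ a) := by
  have key : ∀ u v : H,
      ((inner ℂ u ((Φ a) v) : ℂ) + (inner ℂ v ((Φ (star a)) u) : ℂ)).im = 0 := by
    intro u v
    have h2 := hΦ.two 1 a u v
    simp only [star_one, one_mul, mul_one] at h2
    have hd1 : (inner ℂ u ((Φ 1) u) : ℂ).im = 0 := (Complex.nonneg_iff.mp (hΦ.posOp_one u)).2.symm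
    have hd2 : (inner ℂ v ((Φ (star a * a)) v) : ℂ).im = 0 :=
      (Complex.nonneg_iff.mp (hΦ.one a v)).2.symm
    have := (Complex.nonneg_iff.mp h2).2.symm
    simp only [Complex.add_im, hd1, hd2] at this
    simp only [Complex.add_im]
    linarith [this]
  have conj_eq : ∀ u v : H,
      (inner ℂ v ((Φ (star a)) u) : ℂ) = starRingEnd ℂ (inner ℂ u ((Φ a) v) : ℂ) := by
    intro u v
    have k1 := key u v
    have k2 := key (Complex.I • u) v
    rw [inner_smul_left, map_smul, inner_smul_right] at k2
    set p : ℂ := inner ℂ u ((Φ a) v) with hp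
    set q : ℂ := inner ℂ v ((Φ (star a)) u) with hq
    have k2' : (starRingEnd ℂ Complex.I * p + Complex.I * q).im = 0 := k2
    rw [Complex.ext_iff]
    constructor
    · have := Complex.conj_I ▸ k2'
      simp only [Complex.add_im, Complex.mul_im, Complex.neg_re, Complex.neg_im,
        Complex.I_re, Complex.I_im] at this ⊢
      simp only [Complex.conj_re]
      linarith
    · simp only [Complex.add_im] at k1
      simp only [Complex.conj_im]
      linarith
  rw [ContinuousLinearMap.eq_adjoint_iff]
  intro x y
  calc (inner ℂ ((Φ (star a)) x) y : ℂ)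
      = starRingEnd ℂ (inner ℂ y ((Φ (star a)) x) : ℂ) := (inner_conj_symm _ _).symm
    _ = starRingEnd ℂ (starRingEnd ℂ (inner ℂ x ((Φ a) y) : ℂ)) := by rw [conj_eq x y]
    _ = (inner ℂ x ((Φ a) y) : ℂ) := Complex.conj_conj _

theorem star_mul_self_apply_eq_zero [Nontrivial A] (hΦ : IsCPMap Φ) {x : H}
    (hx : (Φ 1) x = 0) (a : A) : (Φ (star a * a)) x = 0 := by
  obtain ⟨c, hc⟩ := exists_sqrt_norm_sub (A := A) a
  have h1 : 0 ≤ (inner ℂ x ((Φ (star c * c)) x) : ℂ) := hΦ.one c x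
  have halg : algebraMap ℝ A (‖a‖^2) = ((‖a‖^2 : ℝ) : ℂ) • (1 : A) := by
    rw [IsScalarTower.algebraMap_apply ℝ ℂ A, Algebra.algebraMap_eq_smul_one,
      Complex.coe_algebraMap]
  rw [hc, halg, map_sub, map_smul] at h1
  have h1' : 0 ≤ -(inner ℂ x ((Φ (star a * a)) x) : ℂ) := by
    have : ((((‖a‖^2 : ℝ) : ℂ)) • (Φ 1) - Φ (star a * a)) x
        = -( (Φ (star a * a)) x) := by
      simp [hx]
    rw [ContinuousLinearMap.sub_apply] at h1
    simp only [ContinuousLinearMap.smul_apply, hx, smul_zero, zero_sub] at h1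
    rwa [inner_neg_right] at h1
  have h2 := hΦ.one a x
  have hzero : (inner ℂ x ((Φ (star a * a)) x) : ℂ) = 0 := le_antisymm (neg_nonneg.mp h1') h2
  exact (hΦ.posOp a).apply_eq_zero hzero

theorem support [Nontrivial A] (hΦ : IsCPMap Φ) {x : H}
    (hx : (Φ 1) x = 0) (a : A) : (Φ a) x = 0 := by
  have hq : ∀ y : H, (inner ℂ x ((Φ (star a)) y) : ℂ) = (inner ℂ ((Φ a) x) y : ℂ) := by
    intro y
    rw [hΦ.star_apply a, ContinuousLinearMap.adjoint_inner_right]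
  have key : ∀ y : H, (inner ℂ y ((Φ a) x) : ℂ) = 0 := by
    intro y
    by_contra hz0
    set z : ℂ := inner ℂ y ((Φ a) x) with hzdef
    have hN : 0 < Complex.normSq z := by rwa [Complex.normSq_pos]
    set d : ℝ := (inner ℂ y ((Φ 1) y) : ℂ).re with hd
    have hd0 : 0 ≤ d := (Complex.nonneg_iff.mp (hΦ.posOp_one y)).1
    set t : ℝ := (d + 1)/(2 * Complex.normSq z) with ht
    set c : ℂ := -(t:ℂ) * starRingEnd ℂ z with hc
    have h2 := hΦ.two 1 a y (c • x)
    simp only [star_one, one_mul, mul_one] at h2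
    have e3 : (inner ℂ (c • x) ((Φ (star a)) y) : ℂ) = starRingEnd ℂ c * starRingEnd ℂ z := by
      rw [inner_smul_left, hq y, ← inner_conj_symm, hzdef]
    have e2 : (inner ℂ y ((Φ a) (c • x)) : ℂ) = c * z := by
      rw [map_smul, inner_smul_right, hzdef]
    have e4 : (inner ℂ (c • x) ((Φ (star a * a)) (c • x)) : ℂ) = 0 := by
      rw [map_smul, hΦ.star_mul_self_apply_eq_zero hx a]
      simp
    rw [e2, e3, e4, add_zero] at h2
    have hsum : c * z + starRingEnd ℂ c * starRingEnd ℂ z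
        = ((-2 * t * Complex.normSq z : ℝ) : ℂ) := by
      rw [hc]
      simp only [map_mul, map_neg, Complex.conj_ofReal, Complex.conj_conj]
      push_cast
      have h1 : z * starRingEnd ℂ z = (Complex.normSq z : ℂ) := Complex.mul_conj z
      linear_combination (-2 * (t:ℂ)) * h1
    rw [add_assoc, hsum] at h2
    have hre := (Complex.nonneg_iff.mp h2).1
    rw [Complex.add_re, Complex.ofReal_re, ← hd] at hre
    have htN : t * Complex.normSq z = (d + 1)/2 := by
      rw [ht]; field_simp
    nlinarith [hre, htN]
  have := key ((Φ a) x)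
  rwa [inner_self_eq_zero] at this

theorem range_orth [Nontrivial A] (hΦ : IsCPMap Φ) {x : H}
    (hx : (Φ 1) x = 0) (a : A) (y : H) : (inner ℂ x ((Φ a) y) : ℂ) = 0 := by
  have h1 : Φ a = ContinuousLinearMap.adjoint (Φ (star a)) := by
    have := hΦ.star_apply (star a)
    rwa [star_star] at this
  rw [h1, ContinuousLinearMap.adjoint_inner_right, hΦ.support hx (star a), inner_zero_left]

end IsCPMap



section Toolbox

variable {H : Type*} [NormedAddCommGroup H] [InnerProductSpace ℂ H] [CompleteSpace H]
variable (K : Submodule ℂ H) [CompleteSpace K]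

/-- Lift of an operator on `K` to an operator on `H`, extended by zero on `Kᗮ`. -/
def liftOp (X : K →L[ℂ] K) : H →L[ℂ] H :=
  K.subtypeL.comp (X.comp (K.orthogonalProjectionOnto))

/-- The projection `e = ι π` as an operator on `H`. -/
def projO : H →L[ℂ] H := K.subtypeL.comp (K.orthogonalProjectionOnto : H →L[ℂ] K)

variable {K}

@[simp] theorem liftOp_apply (X : K →L[ℂ] K) (x : H) :
    liftOp K X x = (X (K.orthogonalProjectionOnto x) : H) := rfl

@[simp] theorem projO_apply (x : H) : projO K x = (K.orthogonalProjectionOnto x : H) := rfl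

@[simp] theorem compressOp_apply (X : H →L[ℂ] H) (x : K) :
    compressOp K X x = K.orthogonalProjectionOnto (X x) := rfl

theorem liftOp_mul (X Y : K →L[ℂ] K) : liftOp K X * liftOp K Y = liftOp K (X * Y) := by
  ext x
  simp [ContinuousLinearMap.mul_apply, Submodule.orthogonalProjectionOnto_mem_subspace_eq_self]

theorem liftOp_one : liftOp K (1 : K →L[ℂ] K) = projO K := by
  ext x; simp

theorem compress_liftOp (X : K →L[ℂ] K) : compressOp K (liftOp K X) = X := by
  ext x
  simp [Submodule.orthogonalProjectionOnto_mem_subspace_eq_self]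

theorem star_liftOp (X : K →L[ℂ] K) : star (liftOp K X) = liftOp K (star X) := by
  rw [ContinuousLinearMap.star_eq_adjoint, ContinuousLinearMap.star_eq_adjoint]
  unfold liftOp
  rw [ContinuousLinearMap.adjoint_comp, ContinuousLinearMap.adjoint_comp,
    Submodule.adjoint_subtypeL, Submodule.adjoint_orthogonalProjectionOnto]
  rfl

theorem star_compressOp (X : H →L[ℂ] H) : star (compressOp K X) = compressOp K (star X) := by
  rw [ContinuousLinearMap.star_eq_adjoint, ContinuousLinearMap.star_eq_adjoint]
  unfold compressOp
  rw [ContinuousLinearMap.adjoint_comp, ContinuousLinearMap.adjoint_comp,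
    Submodule.adjoint_subtypeL, Submodule.adjoint_orthogonalProjectionOnto]
  rfl

theorem star_projO : star (projO K) = projO K := by
  rw [ContinuousLinearMap.star_eq_adjoint]
  unfold projO
  rw [ContinuousLinearMap.adjoint_comp, Submodule.adjoint_subtypeL,
    Submodule.adjoint_orthogonalProjectionOnto]

theorem projO_mul_liftOp (X : K →L[ℂ] K) : projO K * liftOp K X = liftOp K X := by
  ext x; simp [ContinuousLinearMap.mul_apply, Submodule.orthogonalProjectionOnto_mem_subspace_eq_self]

theorem liftOp_mul_projO (X : K →L[ℂ] K) : liftOp K X * projO K = liftOp K X := by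
  ext x; simp [ContinuousLinearMap.mul_apply, Submodule.orthogonalProjectionOnto_mem_subspace_eq_self,
    Submodule.orthogonalProjectionOnto_starProjection_of_le (le_refl K)]

theorem projO_idem : projO K * projO K = projO K := by
  ext x; simp [ContinuousLinearMap.mul_apply, Submodule.orthogonalProjectionOnto_mem_subspace_eq_self,
    Submodule.starProjection_eq_self_iff, Submodule.starProjection_apply_mem]

/-- `mix X = liftOp X + (1 - e)`. -/
def mixOp (X : K →L[ℂ] K) : H →L[ℂ] H := liftOp K X + (1 - projO K)

theorem mixOp_mul (X Y : K →L[ℂ] K) : mixOp X * mixOp Y = mixOp (X * Y) := by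
  unfold mixOp
  rw [mul_add, add_mul, add_mul, liftOp_mul]
  have h1 : liftOp K X * (1 - projO K) = 0 := by
    rw [mul_sub, mul_one, liftOp_mul_projO, sub_self]
  have h2 : (1 - projO K) * liftOp K Y = 0 := by
    rw [sub_mul, one_mul, projO_mul_liftOp, sub_self]
  have h3 : (1 - projO K) * (1 - projO K) = 1 - projO K := by
    rw [sub_mul, one_mul, mul_sub, mul_one, projO_idem]
    abel
  rw [h1, h2, h3, add_zero, zero_add]

theorem mixOp_one : mixOp (1 : K →L[ℂ] K) = 1 := by
  unfold mixOp
  rw [liftOp_one]; abel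

theorem star_mixOp (X : K →L[ℂ] K) : star (mixOp X) = mixOp (star X) := by
  unfold mixOp
  rw [star_add, star_sub, star_one, star_liftOp, star_projO]

theorem mixOp_isUnit {X : K →L[ℂ] K} (hX : IsUnit X) : IsUnit (mixOp X) := by
  obtain ⟨u, hu⟩ := hX
  refine ⟨⟨mixOp X, mixOp ((↑u⁻¹ : K →L[ℂ] K)), ?_, ?_⟩, rfl⟩
  · rw [mixOp_mul, ← hu, u.mul_inv, mixOp_one]
  · rw [mixOp_mul, ← hu, u.inv_mul, mixOp_one]

theorem mixOp_conj (X Z : K →L[ℂ] K) (Y : K →L[ℂ] K) :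
    mixOp X * liftOp K Y * mixOp Z = liftOp K (X * Y * Z) := by
  unfold mixOp
  have e2 : (1 - projO K) * liftOp K Y = 0 := by
    rw [sub_mul, one_mul, projO_mul_liftOp, sub_self]
  have step1 : (liftOp K X + (1 - projO K)) * liftOp K Y = liftOp K (X * Y) := by
    rw [add_mul, e2, add_zero, liftOp_mul]
  calc (liftOp K X + (1 - projO K)) * liftOp K Y * (liftOp K Z + (1 - projO K))
      = liftOp K (X * Y) * (liftOp K Z + (1 - projO K)) := by rw [step1]
    _ = liftOp K (X * Y * Z) := by
        rw [mul_add, liftOp_mul, mul_sub, mul_one, liftOp_mul_projO, sub_self, add_zero]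

end Toolbox

section Transfer

variable {H : Type*} [NormedAddCommGroup H] [InnerProductSpace ℂ H] [CompleteSpace H]
variable {A : Type*} [NormedRing A] [StarRing A] [CStarRing A] [NormedAlgebra ℂ A]
  [StarModule ℂ A] [CompleteSpace A]
variable {K : Submodule ℂ H} [CompleteSpace K]

/-- Lift of a map `A → B(K)` to a map `A → B(H)`. -/
def liftCP (K : Submodule ℂ H) [CompleteSpace K] (Ψ : A →ₗ[ℂ] (K →L[ℂ] K)) :
    A →ₗ[ℂ] (H →L[ℂ] H) where
  toFun a := liftOp K (Ψ a)
  map_add' a b := by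
    simp [liftOp, map_add, ContinuousLinearMap.add_comp, ContinuousLinearMap.comp_add]
  map_smul' c a := by
    simp [liftOp, map_smul, ContinuousLinearMap.smul_comp, ContinuousLinearMap.comp_smulₛₗ]

@[simp] theorem liftCP_apply (Ψ : A →ₗ[ℂ] (K →L[ℂ] K)) (a : A) :
    liftCP K Ψ a = liftOp K (Ψ a) := rfl

@[simp] theorem compressCP_apply (Φ : A →ₗ[ℂ] (H →L[ℂ] H)) (a : A) :
    compressCP K Φ a = compressOp K (Φ a) := rfl

theorem IsCPMap.compress {Φ : A →ₗ[ℂ] (H →L[ℂ] H)} (hΦ : IsCPMap Φ) :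
    IsCPMap (compressCP K Φ) := by
  intro n a h
  calc (0:ℂ) ≤ ∑ i, ∑ j, (inner ℂ ((h i : H)) ((Φ (star (a i) * a j)) (h j : H)) : ℂ) :=
        hΦ n a (fun i => (h i : H))
    _ = ∑ i, ∑ j, (inner ℂ (h i) ((compressCP K Φ (star (a i) * a j)) (h j)) : ℂ) := by
        refine Finset.sum_congr rfl fun i _ => Finset.sum_congr rfl fun j _ => ?_
        rw [compressCP_apply, compressOp_apply, Submodule.inner_orthogonalProjectionOnto_eq_of_mem_left]

theorem IsCPMap.lift {Ψ : A →ₗ[ℂ] (K →L[ℂ] K)} (hΨ : IsCPMap Ψ) :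
    IsCPMap (liftCP K Ψ) := by
  intro n a h
  calc (0:ℂ) ≤ ∑ i, ∑ j,
        (inner ℂ (K.orthogonalProjectionOnto (h i)) ((Ψ (star (a i) * a j))
          (K.orthogonalProjectionOnto (h j))) : ℂ) := hΨ n a _
    _ = ∑ i, ∑ j, (inner ℂ (h i) ((liftCP K Ψ (star (a i) * a j)) (h j)) : ℂ) := by
        refine Finset.sum_congr rfl fun i _ => Finset.sum_congr rfl fun j _ => ?_
        rw [liftCP_apply, liftOp_apply, Submodule.inner_orthogonalProjectionOnto_eq_of_mem_right]

variable (K) in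
theorem mem_orth_iff {P : H →L[ℂ] H} (hP : IsPosOp P)
    (hK : K = (LinearMap.range (P : H →ₗ[ℂ] H)).topologicalClosure) {x : H} :
    P x = 0 ↔ x ∈ Kᗮ := by
  have hsa : ContinuousLinearMap.adjoint P = P := ContinuousLinearMap.isSelfAdjoint_iff'.mp
    hP.isSelfAdjoint
  constructor
  · intro hx
    have h1 : x ∈ (LinearMap.range (P : H →ₗ[ℂ] H))ᗮ := by
      rw [Submodule.mem_orthogonal]
      intro u hu
      rcases LinearMap.mem_range.mp hu with ⟨y, rfl⟩
      show (inner ℂ (P y) x : ℂ) = 0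
      rw [← hsa, ContinuousLinearMap.adjoint_inner_left, hx, inner_zero_right]
    rw [hK, ← Submodule.orthogonal_orthogonal_eq_closure, Submodule.triorthogonal_eq_orthogonal]
    exact h1
  · intro hx
    have h1 : ∀ y : H, (inner ℂ (P y) x : ℂ) = 0 := by
      intro y
      refine (Submodule.mem_orthogonal _ x).mp ?_ (P y) (LinearMap.mem_range.mpr ⟨y, rfl⟩)
      rw [hK, ← Submodule.orthogonal_orthogonal_eq_closure,
        Submodule.triorthogonal_eq_orthogonal] at hx
      exact hx
    have h2 : ∀ y : H, (inner ℂ y (P x) : ℂ) = 0 := by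
      intro y
      rw [← hsa, ContinuousLinearMap.adjoint_inner_right, h1]
    have := h2 (P x)
    rwa [inner_self_eq_zero] at this

variable (K) in
theorem IsCPMap.decomp [Nontrivial A] {Φ : A →ₗ[ℂ] (H →L[ℂ] H)} (hΦ : IsCPMap Φ)
    {P : H →L[ℂ] H} (hP : IsPosOp P) (hΦ1 : Φ 1 = P)
    (hK : K = (LinearMap.range (P : H →ₗ[ℂ] H)).topologicalClosure) (a : A) :
    Φ a = liftOp K (compressOp K (Φ a)) := by
  have hker : ∀ x : H, x ∈ Kᗮ → (Φ 1) x = 0 := by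
    intro x hx
    rw [hΦ1]
    exact (mem_orth_iff K hP hK).mpr hx
  ext x
  have hsplit : (Φ a) x = (Φ a) (projO K x) := by
    have h0 : (Φ a) (x - projO K x) = 0 :=
      hΦ.support (hker _ (Submodule.sub_starProjection_mem_orthogonal x)) a
    rw [map_sub, sub_eq_zero] at h0
    exact h0
  have hmem : (Φ a) (projO K x) ∈ K := by
    have hm2 : (Φ a) (projO K x) ∈ Kᗮᗮ := by
      rw [Submodule.mem_orthogonal]
      intro u hu
      exact hΦ.range_orth (hker u hu) a _
    rwa [Submodule.orthogonal_orthogonal] at hm2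
  have hproj : ((K.orthogonalProjectionOnto ((Φ a) (projO K x))) : H) = (Φ a) (projO K x) :=
    Submodule.starProjection_eq_self_iff.mpr hmem
  rw [hsplit]
  simp only [liftOp_apply, compressOp_apply]
  exact hproj.symm

end Transfer

section Glue

variable {H : Type*} [NormedAddCommGroup H] [InnerProductSpace ℂ H] [CompleteSpace H]
variable {K : Submodule ℂ H} [CompleteSpace K]

variable (K) in
/-- `compressOp` as a linear map. -/
def compressOpL : (H →L[ℂ] H) →ₗ[ℂ] (K →L[ℂ] K) where
  toFun := compressOp K
  map_add' X Y := by
    simp [compressOp, ContinuousLinearMap.add_comp, ContinuousLinearMap.comp_add]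
  map_smul' c X := by
    simp [compressOp, ContinuousLinearMap.smul_comp, ContinuousLinearMap.comp_smulₛₗ]

variable (K) in
/-- `liftOp` as a linear map. -/
def liftOpL : (K →L[ℂ] K) →ₗ[ℂ] (H →L[ℂ] H) where
  toFun := liftOp K
  map_add' X Y := by
    simp [liftOp, ContinuousLinearMap.add_comp, ContinuousLinearMap.comp_add]
  map_smul' c X := by
    simp [liftOp, ContinuousLinearMap.smul_comp, ContinuousLinearMap.comp_smulₛₗ]

@[simp] theorem compressOpL_apply (X : H →L[ℂ] H) : compressOpL K X = compressOp K X := rfl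
@[simp] theorem liftOpL_apply (X : K →L[ℂ] K) : liftOpL K X = liftOp K X := rfl

theorem liftOp_sum {ι : Type*} (s : Finset ι) (f : ι → (K →L[ℂ] K)) :
    liftOp K (∑ i ∈ s, f i) = ∑ i ∈ s, liftOp K (f i) := by
  have h := map_sum (liftOpL K) f s
  simp only [liftOpL_apply] at h
  exact h

theorem compressOp_sum {ι : Type*} (s : Finset ι) (f : ι → (H →L[ℂ] H)) :
    compressOp K (∑ i ∈ s, f i) = ∑ i ∈ s, compressOp K (f i) := by
  have h := map_sum (compressOpL K) f s
  simp only [compressOpL_apply] at h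
  exact h

theorem compress_conj (S : H →L[ℂ] H) (X : K →L[ℂ] K) :
    compressOp K (star S * liftOp K X * S)
      = star (compressOp K S) * X * compressOp K S := by
  rw [star_compressOp]
  ext x
  simp [ContinuousLinearMap.mul_apply]

theorem compress_right_inv {S R : H →L[ℂ] H} (hSR : S * R = 1)
    (hstab : ∀ x : H, x ∈ Kᗮ → S x ∈ Kᗮ) :
    compressOp K S * compressOp K R = 1 := by
  ext x
  set y : H := R ((x : K) : H) with hy
  have h1 : K.orthogonalProjectionOnto (S (y - projO K y)) = 0 :=
    Submodule.orthogonalProjectionOnto_apply_of_mem_orthogonal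
      (hstab _ (Submodule.sub_starProjection_mem_orthogonal y))
  have h2 : S y = ((x : K) : H) := by
    have := congrArg (fun (T : H →L[ℂ] H) => T ((x : K) : H)) hSR
    simpa [ContinuousLinearMap.mul_apply] using this
  have h3 : S (projO K y) = S y - S (y - projO K y) := by
    rw [← map_sub]; congr 1; abel
  have : K.orthogonalProjectionOnto (S (projO K y)) = x := by
    rw [h3, map_sub, h1, sub_zero, h2]
    exact Submodule.orthogonalProjectionOnto_mem_subspace_eq_self x
  simpa [ContinuousLinearMap.mul_apply, hy] using congrArg (fun v : K => (v : H)) this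

theorem isUnit_of_right_inv_inj {R : Type*} [Ring R] {a b : R}
    (hab : a * b = 1) (hinj : ∀ x y : R, a * x = a * y → x = y) : IsUnit a := by
  have hba : b * a = 1 := by
    apply hinj
    rw [← mul_assoc, hab, one_mul, mul_one]
  exact ⟨⟨a, b, hab, hba⟩, rfl⟩

theorem injective_compress_of_conj {P₀ S₀ : K →L[ℂ] K}
    (hconj : star S₀ * P₀ * S₀ = P₀) (hPinj : ∀ x : K, P₀ x = 0 → x = 0)
    {x : K} (hx : S₀ x = 0) : x = 0 := by
  apply hPinj
  have := congrArg (fun (T : K →L[ℂ] K) => T x) hconj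
  simpa [ContinuousLinearMap.mul_apply, hx] using this.symm

theorem compress_injective_of_pos {P : H →L[ℂ] H} (hP : IsPosOp P)
    (hK : K = (LinearMap.range (P : H →ₗ[ℂ] H)).topologicalClosure)
    (hPdec : P = liftOp K (compressOp K P)) :
    ∀ x : K, compressOp K P x = 0 → x = 0 := by
  intro x hx
  have h1 : P ((x : K) : H) = 0 := by
    conv_lhs => rw [hPdec]
    rw [liftOp_apply]
    rw [Submodule.orthogonalProjectionOnto_mem_subspace_eq_self, hx]
    simp
  have h2 : ((x : K) : H) ∈ Kᗮ := (mem_orth_iff K hP hK).mp h1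
  have h3 : (inner ℂ ((x : K) : H) ((x : K) : H) : ℂ) = 0 :=
    (Submodule.mem_orthogonal _ _).mp h2 _ (x : K).2
  have h4 : ((x : K) : H) = 0 := by rwa [inner_self_eq_zero] at h3
  exact Subtype.ext h4

theorem stab_of_conj {P S : H →L[ℂ] H} (hP : IsPosOp P)
    (hconj : star S * P * S = P) : ∀ x : H, x ∈ Kᗮ →
    (hK : K = (LinearMap.range (P : H →ₗ[ℂ] H)).topologicalClosure) → S x ∈ Kᗮ := by
  intro x hx hK
  have hPx : P x = 0 := (mem_orth_iff K hP hK).mpr hx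
  have h1 : (inner ℂ (S x) (P (S x)) : ℂ) = 0 := by
    have := congrArg (fun (T : H →L[ℂ] H) => (inner ℂ x (T x) : ℂ)) hconj
    simp only [ContinuousLinearMap.mul_apply] at this
    rw [ContinuousLinearMap.star_eq_adjoint, ContinuousLinearMap.adjoint_inner_right] at this
    rw [this, hPx, inner_zero_right]
  exact (mem_orth_iff K hP hK).mp (hP.apply_eq_zero h1)

end Glue

end AuxLemmas

/-- Proposition `prop-Phi-Phi0`. For `Φ ∈ CP^{(P)}` with `P ≠ 0`,
`ker P ≠ 0`, `K` the closure of the range of `P`, `P₀` and `Φ₀` the compressions of `P` and `Φ`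
to `K`: (i) if `Φ` is `P`-`C*`-extreme then `Φ₀` is `P₀`-`C*`-extreme; (ii) if `H` is
finite-dimensional and `Φ₀` is `P₀`-`C*`-extreme then `Φ` is `P`-`C*`-extreme. -/
theorem stmt9 {A : Type*} [NormedRing A] [StarRing A] [CStarRing A] [NormedAlgebra ℂ A] [StarModule ℂ A] [CompleteSpace A]
    {H : Type*} [NormedAddCommGroup H] [InnerProductSpace ℂ H] [CompleteSpace H]
    (P : H →L[ℂ] H) (hP : IsPosOp P) (hP0 : P ≠ 0) (hker : LinearMap.ker (P : H →ₗ[ℂ] H) ≠ ⊥)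
    (Φ : A →ₗ[ℂ] (H →L[ℂ] H)) (hΦ : Φ ∈ CPP (A := A) P)
    (K : Submodule ℂ H) [CompleteSpace K]
    (hK : K = (LinearMap.range (P : H →ₗ[ℂ] H)).topologicalClosure) :
    (IsPCExtreme P Φ → IsPCExtreme (compressOp K P) (compressCP K Φ)) ∧
    (FiniteDimensional ℂ H →
      IsPCExtreme (compressOp K P) (compressCP K Φ) → IsPCExtreme P Φ) := by
  have hA : Nontrivial A := by
    rcases subsingleton_or_nontrivial A with hs | hn
    · exfalso
      apply hP0
      have hΦ' := hΦ
      simp only [CPP, Set.mem_setOf_eq] at hΦ'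
      rw [← hΦ'.2, show (1 : A) = 0 from Subsingleton.elim _ _, map_zero]
    · exact hn
  have hΦ' := hΦ
  simp only [CPP, Set.mem_setOf_eq] at hΦ'
  have hcp : IsCPMap Φ := hΦ'.1
  have hΦ1 : Φ 1 = P := hΦ'.2
  have hdec : ∀ a : A, Φ a = liftOp K (compressOp K (Φ a)) := fun a =>
    hcp.decomp K hP hΦ1 hK a
  have hPdec : P = liftOp K (compressOp K P) := by
    conv_lhs => rw [← hΦ1]
    rw [hdec 1, hΦ1]
  have hPinj : ∀ x : K, compressOp K P x = 0 → x = 0 :=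
    compress_injective_of_pos hP hK hPdec
  have hΦ₀mem : compressCP K Φ ∈ CPP (A := A) (compressOp K P) := by
    simp only [CPP, Set.mem_setOf_eq]
    exact ⟨hcp.compress, by rw [compressCP_apply, hΦ1]⟩
  constructor
  · -- (i)
    intro hExt
    refine ⟨hΦ₀mem, ?_⟩
    intro n T₀ Ψ hTinv hΨmem hTsum hdecomp₀
    have hΨmem' : ∀ j, IsCPMap (Ψ j) ∧ (Ψ j) 1 = compressOp K P := by
      intro j
      have h := hΨmem j
      simpa only [CPP, Set.mem_setOf_eq] using h
    have hT : ∀ j, IsUnit (mixOp (T₀ j)) := fun j => mixOp_isUnit (hTinv j)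
    have hΦs : ∀ j, liftCP K (Ψ j) ∈ CPP (A := A) P := by
      intro j
      simp only [CPP, Set.mem_setOf_eq]
      refine ⟨(hΨmem' j).1.lift, ?_⟩
      rw [liftCP_apply, (hΨmem' j).2]
      exact hPdec.symm
    have hsum : (∑ j, star (mixOp (T₀ j)) * P * mixOp (T₀ j)) = P := by
      have h1 : ∀ j, star (mixOp (T₀ j)) * P * mixOp (T₀ j)
          = liftOp K (star (T₀ j) * compressOp K P * T₀ j) := by
        intro j
        conv_lhs => rw [hPdec]
        rw [star_mixOp, mixOp_conj]
      rw [Finset.sum_congr rfl fun j _ => h1 j]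
      calc ∑ j, liftOp K (star (T₀ j) * compressOp K P * T₀ j)
          = liftOp K (∑ j, star (T₀ j) * compressOp K P * T₀ j) :=
            (liftOp_sum _ _).symm
        _ = P := by rw [hTsum, ← hPdec]
    have hΦdecomp : Φ = ∑ j, (conjAd (mixOp (T₀ j))).comp (liftCP K (Ψ j)) := by
      apply LinearMap.ext; intro a
      rw [LinearMap.sum_apply]
      have h1 : ∀ j, ((conjAd (mixOp (T₀ j))).comp (liftCP K (Ψ j))) a
          = liftOp K (star (T₀ j) * (Ψ j a) * T₀ j) := by
        intro j
        show star (mixOp (T₀ j)) * liftOp K (Ψ j a) * mixOp (T₀ j) = _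
        rw [star_mixOp, mixOp_conj]
      rw [Finset.sum_congr rfl fun j _ => h1 j]
      have h2 : compressCP K Φ a = ∑ j, star (T₀ j) * (Ψ j a) * T₀ j := by
        rw [hdecomp₀, LinearMap.sum_apply]
        exact Finset.sum_congr rfl fun j _ => rfl
      calc Φ a = liftOp K (compressOp K (Φ a)) := hdec a
        _ = liftOp K (∑ j, star (T₀ j) * (Ψ j a) * T₀ j) := by
            rw [show compressOp K (Φ a) = compressCP K Φ a from rfl, h2]
        _ = ∑ j, liftOp K (star (T₀ j) * (Ψ j a) * T₀ j) := liftOp_sum _ _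
    intro j
    obtain ⟨S, hSunit, hSeq⟩ := hExt.2 n (fun j => mixOp (T₀ j)) (fun j => liftCP K (Ψ j))
      hT hΦs hsum hΦdecomp j
    have hconjP : star S * P * S = P := by
      have h1 : liftCP K (Ψ j) 1 = star S * (Φ 1) * S := by rw [hSeq]; rfl
      rw [liftCP_apply, (hΨmem' j).2, ← hPdec, hΦ1] at h1
      exact h1.symm
    have hstab : ∀ x : H, x ∈ Kᗮ → S x ∈ Kᗮ := fun x hx => stab_of_conj hP hconjP x hx hK
    obtain ⟨u, hu⟩ := hSunit
    have hSR : S * (↑u⁻¹ : H →L[ℂ] H) = 1 := by rw [← hu]; exact u.mul_inv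
    have hright : compressOp K S * compressOp K (↑u⁻¹ : H →L[ℂ] H) = 1 :=
      compress_right_inv hSR hstab
    have hconj₀ : star (compressOp K S) * compressOp K P * compressOp K S = compressOp K P := by
      have h1 : compressOp K (star S * liftOp K (compressOp K P) * S) = compressOp K P := by
        rw [← hPdec, hconjP]
      rw [compress_conj] at h1
      exact h1
    have hinj : ∀ x : K, compressOp K S x = 0 → x = 0 := fun x hx =>
      injective_compress_of_conj hconj₀ hPinj hx
    refine ⟨compressOp K S, ?_, ?_⟩
    · apply isUnit_of_right_inv_inj hright
      intro X Y hXY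
      refine ContinuousLinearMap.ext fun x => ?_
      have h2 : compressOp K S (X x) = compressOp K S (Y x) := by
        have := congrArg (fun (T : K →L[ℂ] K) => T x) hXY
        simpa [ContinuousLinearMap.mul_apply] using this
      have h0 : compressOp K S (X x - Y x) = 0 := by rw [map_sub, h2, sub_self]
      exact sub_eq_zero.mp (hinj _ h0)
    · apply LinearMap.ext; intro a
      have h1 : liftOp K (Ψ j a) = star S * liftOp K (compressOp K (Φ a)) * S := by
        rw [← hdec a]
        exact congrArg (fun (Ξ : A →ₗ[ℂ] (H →L[ℂ] H)) => Ξ a) hSeq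
      have h2 := congrArg (compressOp K) h1
      rw [compress_liftOp, compress_conj] at h2
      exact h2
  · -- (ii)
    intro hfin hExt₀
    haveI := hfin
    haveI : FiniteDimensional ℂ K := inferInstance
    refine ⟨hΦ, ?_⟩
    intro n T Φs hTunit hΦsmem hTsum hdecomp
    have hΦsmem' : ∀ j, IsCPMap (Φs j) ∧ (Φs j) 1 = P := by
      intro j
      have h := hΦsmem j
      simpa only [CPP, Set.mem_setOf_eq] using h
    have hTstab : ∀ j, ∀ x : H, x ∈ Kᗮ → T j x ∈ Kᗮ := by
      intro j x hx
      have hPx : P x = 0 := (mem_orth_iff K hP hK).mpr hx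
      have hsum0 : ∑ i, (inner ℂ x ((star (T i) * P * T i) x) : ℂ) = 0 := by
        calc ∑ i, (inner ℂ x ((star (T i) * P * T i) x) : ℂ)
            = inner ℂ x ((∑ i, star (T i) * P * T i) x) := by
              rw [ContinuousLinearMap.sum_apply, inner_sum]
          _ = (0:ℂ) := by rw [hTsum, hPx, inner_zero_right]
      have hterm : ∀ i, 0 ≤ (inner ℂ x ((star (T i) * P * T i) x) : ℂ) := by
        intro i
        rw [ContinuousLinearMap.mul_apply, ContinuousLinearMap.mul_apply,
          ContinuousLinearMap.star_eq_adjoint, ContinuousLinearMap.adjoint_inner_right]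
        exact hP _
      have hzero := (Finset.sum_eq_zero_iff_of_nonneg (fun i _ => hterm i)).mp hsum0 j
        (Finset.mem_univ j)
      rw [ContinuousLinearMap.mul_apply, ContinuousLinearMap.mul_apply,
        ContinuousLinearMap.star_eq_adjoint, ContinuousLinearMap.adjoint_inner_right] at hzero
      exact (mem_orth_iff K hP hK).mp (hP.apply_eq_zero hzero)
    have hΨmem : ∀ j, compressCP K (Φs j) ∈ CPP (A := A) (compressOp K P) := by
      intro j
      simp only [CPP, Set.mem_setOf_eq]
      exact ⟨(hΦsmem' j).1.compress, by rw [compressCP_apply, (hΦsmem' j).2]⟩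
    have hΦsdec : ∀ j (a : A), Φs j a = liftOp K (compressOp K (Φs j a)) := fun j a =>
      (hΦsmem' j).1.decomp K hP (hΦsmem' j).2 hK a
    have hA₀unit : ∀ j, IsUnit (compressOp K (T j)) := by
      intro j
      obtain ⟨u, hu⟩ := hTunit j
      have hSR : T j * (↑u⁻¹ : H →L[ℂ] H) = 1 := by rw [← hu]; exact u.mul_inv
      have hright : compressOp K (T j) * compressOp K (↑u⁻¹ : H →L[ℂ] H) = 1 :=
        compress_right_inv hSR (hTstab j)
      have hsurj : Function.Surjective (compressOp K (T j)) := by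
        intro y
        refine ⟨compressOp K (↑u⁻¹ : H →L[ℂ] H) y, ?_⟩
        have := congrArg (fun (X : K →L[ℂ] K) => X y) hright
        simpa [ContinuousLinearMap.mul_apply] using this
      have hinj : Function.Injective (compressOp K (T j)) := by
        have h3 : Function.Injective ((compressOp K (T j) : K →ₗ[ℂ] K)) :=
          LinearMap.injective_iff_surjective.mpr hsurj
        exact h3
      apply isUnit_of_right_inv_inj hright
      intro X Y hXY
      refine ContinuousLinearMap.ext fun x => ?_
      apply hinj
      have := congrArg (fun (Z : K →L[ℂ] K) => Z x) hXY
      simpa [ContinuousLinearMap.mul_apply] using this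
    have hTsum₀ : (∑ j, star (compressOp K (T j)) * compressOp K P * compressOp K (T j))
        = compressOp K P := by
      have h1 : ∀ j, star (compressOp K (T j)) * compressOp K P * compressOp K (T j)
          = compressOp K (star (T j) * P * T j) := by
        intro j
        conv_rhs => rw [hPdec]
        rw [compress_conj]
      rw [Finset.sum_congr rfl fun j _ => h1 j]
      calc ∑ j, compressOp K (star (T j) * P * T j)
          = compressOp K (∑ j, star (T j) * P * T j) :=
            (compressOp_sum _ _).symm
        _ = compressOp K P := by rw [hTsum]
    have hdec₀ : compressCP K Φ
        = ∑ j, (conjAd (compressOp K (T j))).comp (compressCP K (Φs j)) := by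
      apply LinearMap.ext; intro a
      rw [LinearMap.sum_apply]
      have h1 : ∀ j, ((conjAd (compressOp K (T j))).comp (compressCP K (Φs j))) a
          = compressOp K (star (T j) * Φs j a * T j) := by
        intro j
        show star (compressOp K (T j)) * compressOp K (Φs j a) * compressOp K (T j) = _
        conv_rhs => rw [show star (T j) * Φs j a * T j
          = star (T j) * liftOp K (compressOp K (Φs j a)) * T j from by rw [← hΦsdec j a]]
        rw [compress_conj]
      rw [Finset.sum_congr rfl fun j _ => h1 j]
      calc compressCP K Φ a = compressOp K (Φ a) := rfl
        _ = compressOp K (∑ j, star (T j) * Φs j a * T j) := by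
            congr 1
            rw [hdecomp, LinearMap.sum_apply]
            exact Finset.sum_congr rfl fun j _ => rfl
        _ = ∑ j, compressOp K (star (T j) * Φs j a * T j) := compressOp_sum _ _
    intro j
    obtain ⟨S₀, hS₀unit, hS₀eq⟩ := hExt₀.2 n (fun j => compressOp K (T j))
      (fun j => compressCP K (Φs j)) hA₀unit hΨmem hTsum₀ hdec₀ j
    refine ⟨mixOp S₀, mixOp_isUnit hS₀unit, ?_⟩
    apply LinearMap.ext; intro a
    show Φs j a = star (mixOp S₀) * Φ a * mixOp S₀
    rw [hdec a, star_mixOp, mixOp_conj, hΦsdec j a]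
    congr 1
    have := congrArg (fun (Ξ : A →ₗ[ℂ] (K →L[ℂ] K)) => Ξ a) hS₀eq
    exact this


end
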